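/- Let S be the Chacon set, the set of factors of the fixpoint of the morphism f(a) = aabc, f(b) = bc, f(c) = abc over A = {a,b,c}. Then the word abc is strong (m(abc) = 1 > 0) and the word bca is weak (m(bca) = −1 < 0); in particular S is not neutral. -/

import Mathlib

namespace Paper

variable {A : Type*}

/-- A set of words is factorial if it contains all factors of its elements. -/
def Factorial (S : Set (List A)) : Prop := ∀ w ∈ S, ∀ u : List A, u <:+: w → u ∈ S

def Lext (S : Set (List A)) (w : List A) : Set A := {a | a :: w ∈ S}
def Rext (S : Set (List A)) (w : List A) : Set A := {a | w ++ [a] ∈ S}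
def Eext (S : Set (List A)) (w : List A) : Set (A × A) := {p | p.1 :: (w ++ [p.2]) ∈ S}

def ExtVertex (S : Set (List A)) (w : List A) :=
  {v : A ⊕ A // Sum.elim (fun a => a ∈ Lext S w) (fun b => b ∈ Rext S w) v}

/-- The extension graph of `w` in `S`. -/
def extGraph (S : Set (List A)) (w : List A) : SimpleGraph (ExtVertex S w) where
  Adj u v := (∃ a b, u.1 = Sum.inl a ∧ v.1 = Sum.inr b ∧ (a, b) ∈ Eext S w) ∨
             (∃ a b, u.1 = Sum.inr b ∧ v.1 = Sum.inl a ∧ (a, b) ∈ Eext S w)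
  symm := by
    constructor
    rintro u v (⟨a, b, h1, h2, h3⟩ | ⟨a, b, h1, h2, h3⟩)
    · exact Or.inr ⟨a, b, h2, h1, h3⟩
    · exact Or.inl ⟨a, b, h2, h1, h3⟩
  loopless := by
    constructor
    rintro u (⟨a, b, h1, h2, _⟩ | ⟨a, b, h1, h2, _⟩) <;> rw [h1] at h2 <;> simp at h2

def IsPrefixCode (X : Set (List A)) : Prop :=
  (∀ x ∈ X, x ≠ []) ∧ ∀ x ∈ X, ∀ y ∈ X, x <+: y → x = y

def IsSuffixCode (X : Set (List A)) : Prop :=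
  (∀ x ∈ X, x ≠ []) ∧ ∀ x ∈ X, ∀ y ∈ X, x <:+ y → x = y

def IsBifixCode (X : Set (List A)) : Prop := IsPrefixCode X ∧ IsSuffixCode X

/-- The submonoid `X*` generated by a set of words. -/
def starOf (X : Set (List A)) : Set (List A) :=
  {m | ∃ ls : List (List A), (∀ u ∈ ls, u ∈ X) ∧ m = ls.flatten}

/-- A parse of `w` with respect to `X` : `w = v ++ x ++ u`, `v` has no suffix in `X`,
`x ∈ X*`, `u` has no prefix in `X`. -/
def IsParse (X : Set (List A)) (w : List A) (p : List A × List A × List A) : Prop :=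
  w = p.1 ++ p.2.1 ++ p.2.2 ∧ (∀ s, s <:+ p.1 → s ∉ X) ∧ p.2.1 ∈ starOf X ∧
    (∀ t, t <+: p.2.2 → t ∉ X)

noncomputable def parseCount (X : Set (List A)) (w : List A) : ℕ :=
  {p : List A × List A × List A | IsParse X w p}.ncard

/-- `X` has `S`-degree `d`. -/
def SDegreeIs (S X : Set (List A)) (d : ℕ) : Prop :=
  (∀ w ∈ S, parseCount X w ≤ d) ∧ ∃ w ∈ S, parseCount X w = d

def IsSMaximalBifixCode (S X : Set (List A)) : Prop :=
  IsBifixCode X ∧ X ⊆ S ∧ ∀ Y : Set (List A), IsBifixCode Y → Y ⊆ S → X ⊆ Y → Y = X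

def Recurrent (S : Set (List A)) : Prop :=
  Factorial S ∧ S ≠ {[]} ∧ S.Nonempty ∧ ∀ u ∈ S, ∀ w ∈ S, ∃ v, u ++ v ++ w ∈ S

def UniformlyRecurrent (S : Set (List A)) : Prop :=
  Factorial S ∧ (∀ w ∈ S, ∃ a : A, w ++ [a] ∈ S) ∧
    ∀ u ∈ S, ∃ n : ℕ, ∀ w ∈ S, w.length = n → u <:+: w

/-- The element of the free group corresponding to a word. -/
def toFG (w : List A) : FreeGroup A := (w.map FreeGroup.of).prod

/-- `T` is a basis of the subgroup `H` of the free group on `A`. -/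
def IsBasisOf (T : Set (FreeGroup A)) (H : Subgroup (FreeGroup A)) : Prop :=
  Function.Injective (FreeGroup.lift (Subtype.val : T → FreeGroup A)) ∧
  (FreeGroup.lift (Subtype.val : T → FreeGroup A)).range = H


/-- The Chacon morphism `f(a) = aabc`, `f(b) = bc`, `f(c) = abc` over `A = {a, b, c}`
encoded as `a = 0`, `b = 1`, `c = 2` in `Fin 3`. -/
def chaconMorphism (i : Fin 3) : List (Fin 3) :=
  if i = 0 then [0, 0, 1, 2] else if i = 1 then [1, 2] else [0, 1, 2]

def chaconSub (l : List (Fin 3)) : List (Fin 3) := (l.map chaconMorphism).flatten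

/-- The Chacon set: the set of factors of the fixpoint `f^ω(a)`, equivalently the set of
words which are factors of some `fⁿ(a)`. -/
def chaconSet : Set (List (Fin 3)) := {w | ∃ n : ℕ, w <:+: chaconSub^[n] [0]}

lemma chaconSub_append (u v : List (Fin 3)) :
    chaconSub (u ++ v) = chaconSub u ++ chaconSub v := by
  simp [chaconSub]

lemma chaconSub_infix {u v : List (Fin 3)} (h : u <:+: v) :
    chaconSub u <:+: chaconSub v := by
  obtain ⟨s, t, rfl⟩ := h
  rw [chaconSub_append, chaconSub_append]
  exact ⟨chaconSub s, chaconSub t, rfl⟩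

lemma chaconSub_prefix {u v : List (Fin 3)} (h : u <+: v) :
    chaconSub u <+: chaconSub v := by
  obtain ⟨t, rfl⟩ := h
  rw [chaconSub_append]
  exact ⟨chaconSub t, rfl⟩

lemma chacon_prefix_succ (n : ℕ) : chaconSub^[n] [0] <+: chaconSub^[n + 1] [0] := by
  induction n with
  | zero => decide
  | succ n ih =>
    rw [Function.iterate_succ_apply', Function.iterate_succ_apply']
    exact chaconSub_prefix ih

lemma chacon_prefix_mono {m n : ℕ} (h : m ≤ n) :
    chaconSub^[m] [0] <+: chaconSub^[n] [0] := by
  induction n with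
  | zero => simp_all
  | succ n ih =>
    rcases Nat.lt_or_ge m (n + 1) with h' | h'
    · exact (ih (Nat.lt_succ_iff.mp h')).trans (chacon_prefix_succ n)
    · have : m = n + 1 := le_antisymm h h'
      subst this; exact List.prefix_rfl

lemma two_le_morph (a : Fin 3) : 2 ≤ (chaconMorphism a).length := by fin_cases a <;> decide

/-- A short prefix of `chaconSub u` is a prefix of `chaconSub` of a short prefix of `u`. -/
lemma prefix_take : ∀ (k : ℕ) (u w : List (Fin 3)), w <+: chaconSub u → w.length ≤ 2 * k →
    w <+: chaconSub (u.take k) := by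
  intro k
  induction k with
  | zero =>
    intro u w hw hl
    have : w = [] := List.eq_nil_of_length_eq_zero (Nat.le_zero.mp (by simpa using hl))
    simp [this]
  | succ k ih =>
    intro u w hw hl
    match u with
    | [] => simpa using hw
    | a :: u' =>
      have hsub : chaconSub (a :: u') = chaconMorphism a ++ chaconSub u' := by
        simp [chaconSub]
      rw [hsub] at hw
      rcases le_or_gt w.length (chaconMorphism a).length with h | h
      · have h1 : w <+: chaconMorphism a :=
          List.prefix_of_prefix_length_le hw (List.prefix_append _ _) h
        have : chaconSub ((a :: u').take (k + 1)) =
            chaconMorphism a ++ chaconSub (u'.take k) := by simp [chaconSub]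
        rw [this]
        exact h1.trans (List.prefix_append _ _)
      · have h2 : chaconMorphism a <+: w :=
          List.prefix_of_prefix_length_le (List.prefix_append _ _) hw (le_of_lt h)
        obtain ⟨w', rfl⟩ := h2
        have hw' : w' <+: chaconSub u' := (List.prefix_append_right_inj _).mp hw
        have hl' : w'.length ≤ 2 * k := by
          have := two_le_morph a
          have hlen : (chaconMorphism a ++ w').length =
            (chaconMorphism a).length + w'.length := by simp
          omega
        have : chaconSub ((a :: u').take (k + 1)) =
            chaconMorphism a ++ chaconSub (u'.take k) := by simp [chaconSub]
        rw [this]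
        exact (List.prefix_append_right_inj _).mpr (ih u' w' hw' hl')

/-- Decomposition of an infix of an append. -/
lemma infix_split {A : Type*} {w x y : List A} (h : w <:+: x ++ y) :
    w <:+: x ∨ w <:+: y ∨
      ∃ w₁ w₂, w = w₁ ++ w₂ ∧ w₁ <:+ x ∧ w₁ ≠ [] ∧ w₂ <+: y := by
  obtain ⟨s, t, e⟩ := h
  have hw : w = ((x ++ y).drop s.length).take w.length := by
    have : (x ++ y).drop s.length = w ++ t := by
      rw [← e]; simp
    rw [this, List.take_left]
  rw [List.drop_append, List.take_append] at hw
  rcases le_or_gt w.length (x.drop s.length).length with h1 | h1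
  · left
    have h0 : w.length - (List.drop s.length x).length = 0 := by omega
    rw [h0] at hw
    simp only [List.take_zero, List.append_nil] at hw
    rw [hw]
    exact (List.take_prefix _ _).isInfix.trans (List.drop_suffix _ _).isInfix
  · have hA : (x.drop s.length).take w.length = x.drop s.length :=
      List.take_of_length_le (le_of_lt h1)
    rw [hA] at hw
    rcases eq_or_ne (x.drop s.length) [] with hnil | hnil
    · right; left
      rw [hnil] at hw
      simp only [List.nil_append, List.length_nil] at hw
      rw [hw]
      exact (List.take_prefix _ _).isInfix.trans (List.drop_suffix _ _).isInfix
    · right; right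
      have hsx : s.length < x.length := by
        by_contra hc
        exact hnil (List.drop_eq_nil_of_le (by omega))
      have hy : List.drop (s.length - x.length) y = y := by
        rw [Nat.sub_eq_zero_of_le (le_of_lt hsx), List.drop_zero]
      rw [hy] at hw
      exact ⟨x.drop s.length, _, hw, List.drop_suffix _ _, hnil, List.take_prefix _ _⟩

/-- Transfer lemma: a short factor of `chaconSub u` is a factor of `chaconSub v`
for a short factor `v` of `u`. -/
lemma transfer : ∀ (u w : List (Fin 3)), w <:+: chaconSub u → w.length ≤ 5 →
    ∃ v, v <:+: u ∧ v.length ≤ 5 ∧ w <:+: chaconSub v := by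
  intro u
  induction u with
  | nil =>
    intro w hw _
    refine ⟨[], List.infix_refl _, by simp, ?_⟩
    simpa [chaconSub] using hw
  | cons a u' ih =>
    intro w hw hl
    have hsub : chaconSub (a :: u') = chaconMorphism a ++ chaconSub u' := by simp [chaconSub]
    rw [hsub] at hw
    rcases infix_split hw with h | h | ⟨w₁, w₂, rfl, h1, h2, h3⟩
    · refine ⟨[a], List.IsPrefix.isInfix ⟨u', rfl⟩, by simp, ?_⟩
      simpa [chaconSub] using h
    · obtain ⟨v, hv1, hv2, hv3⟩ := ih w h hl
      exact ⟨v, hv1.trans (List.suffix_cons a u').isInfix, hv2, hv3⟩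
    · have hw₂ : w₂.length ≤ 2 * 2 := by
        have : w₁.length ≠ 0 := by simpa using h2
        have := List.length_append (as := w₁) (bs := w₂)
        omega
      have hp := prefix_take 2 u' w₂ h3 hw₂
      refine ⟨a :: u'.take 2, ?_, ?_, ?_⟩
      · exact (List.cons_prefix_cons.mpr ⟨rfl, List.take_prefix 2 u'⟩).isInfix
      · have := List.length_take (i := 2) (l := u')
        simp only [List.length_cons]
        omega
      · obtain ⟨s, hs⟩ := h1
        obtain ⟨t, ht⟩ := hp
        refine ⟨s, t, ?_⟩
        have : chaconSub (a :: u'.take 2) = chaconMorphism a ++ chaconSub (u'.take 2) := by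
          simp [chaconSub]
        rw [this, ← hs, ← ht]
        simp

set_option maxRecDepth 100000 in
/-- Stabilization base case: length ≤ 5 factors of `f⁴(a)` are factors of `f³(a)`. -/
lemma stab_base : ∀ i < 121, ∀ k < 6,
    (((chaconSub^[4] [0]).drop i).take k) <:+: chaconSub^[3] [0] := by decide

set_option maxRecDepth 10000 in
lemma len4 : (chaconSub^[4] ([0] : List (Fin 3))).length = 121 := by decide

lemma infix_f3 {w : List (Fin 3)} (hl : w.length ≤ 5) (hw : w <:+: chaconSub^[4] [0]) :
    w <:+: chaconSub^[3] [0] := by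
  obtain ⟨s, t, e⟩ := hw
  have hweq : w = ((chaconSub^[4] [0]).drop s.length).take w.length := by
    have : (chaconSub^[4] ([0] : List (Fin 3))).drop s.length = w ++ t := by rw [← e]; simp
    rw [this, List.take_left]
  rcases Nat.lt_or_ge s.length 121 with h | h
  · rw [hweq]; exact stab_base s.length h w.length (by omega)
  · have : (chaconSub^[4] ([0] : List (Fin 3))).drop s.length = [] := by
      apply List.drop_eq_nil_of_le; rw [len4]; exact h
    rw [this] at hweq
    simp only [List.take_nil] at hweq
    rw [hweq]
    exact List.nil_infix

lemma stab : ∀ (n : ℕ) (w : List (Fin 3)), w.length ≤ 5 → w <:+: chaconSub^[n] [0] →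
    w <:+: chaconSub^[3] [0] := by
  intro n
  induction n with
  | zero => intro w _ hw; exact hw.trans (chacon_prefix_mono (by norm_num)).isInfix
  | succ n ih =>
    intro w hl hw
    rcases Nat.lt_or_ge n 3 with h | h
    · exact hw.trans (chacon_prefix_mono (by omega)).isInfix
    · rw [Function.iterate_succ_apply'] at hw
      obtain ⟨v, hv1, hv2, hv3⟩ := transfer _ w hw hl
      have hv4 : v <:+: chaconSub^[3] [0] := ih v hv2 hv1
      have : chaconSub v <:+: chaconSub^[4] [0] := by
        rw [show (4 : ℕ) = 3 + 1 from rfl, Function.iterate_succ_apply']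
        exact chaconSub_infix hv4
      exact infix_f3 hl (hv3.trans this)

lemma mem_chacon_iff {w : List (Fin 3)} (hl : w.length ≤ 5) :
    w ∈ chaconSet ↔ w <:+: chaconSub^[3] [0] :=
  ⟨fun ⟨n, hn⟩ => stab n w hl hn, fun h => ⟨3, h⟩⟩



set_option maxRecDepth 4000 in
lemma hE_abc : Eext chaconSet [0, 1, 2] =
    ↑({(0, 0), (2, 0), (0, 1), (2, 1)} : Finset (Fin 3 × Fin 3)) := by
  ext p
  rw [Eext, Set.mem_setOf_eq, mem_chacon_iff (by simp)]
  simp only [Finset.coe_insert, Set.mem_insert_iff, Finset.coe_singleton,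
    Set.mem_singleton_iff]
  revert p; decide

set_option maxRecDepth 4000 in
lemma hE_bca : Eext chaconSet [1, 2, 0] =
    ↑({(0, 0), (2, 1)} : Finset (Fin 3 × Fin 3)) := by
  ext p
  rw [Eext, Set.mem_setOf_eq, mem_chacon_iff (by simp)]
  simp only [Finset.coe_insert, Set.mem_insert_iff, Finset.coe_singleton,
    Set.mem_singleton_iff]
  revert p; decide

set_option maxRecDepth 4000 in
lemma hL_abc : Lext chaconSet [0, 1, 2] = ↑({0, 2} : Finset (Fin 3)) := by
  ext a
  rw [Lext, Set.mem_setOf_eq, mem_chacon_iff (by simp)]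
  simp only [Finset.coe_insert, Set.mem_insert_iff, Finset.coe_singleton,
    Set.mem_singleton_iff]
  revert a; decide

set_option maxRecDepth 4000 in
lemma hL_bca : Lext chaconSet [1, 2, 0] = ↑({0, 2} : Finset (Fin 3)) := by
  ext a
  rw [Lext, Set.mem_setOf_eq, mem_chacon_iff (by simp)]
  simp only [Finset.coe_insert, Set.mem_insert_iff, Finset.coe_singleton,
    Set.mem_singleton_iff]
  revert a; decide

set_option maxRecDepth 4000 in
lemma hR_abc : Rext chaconSet [0, 1, 2] = ↑({0, 1} : Finset (Fin 3)) := by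
  ext a
  rw [Rext, Set.mem_setOf_eq, mem_chacon_iff (by simp)]
  simp only [Finset.coe_insert, Set.mem_insert_iff, Finset.coe_singleton,
    Set.mem_singleton_iff]
  revert a; decide

set_option maxRecDepth 4000 in
lemma hR_bca : Rext chaconSet [1, 2, 0] = ↑({0, 1} : Finset (Fin 3)) := by
  ext a
  rw [Rext, Set.mem_setOf_eq, mem_chacon_iff (by simp)]
  simp only [Finset.coe_insert, Set.mem_insert_iff, Finset.coe_singleton,
    Set.mem_singleton_iff]
  revert a; decide

/-- In the Chacon set, the word `abc` is strong (`m(abc) = 1`), the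
word `bca` is weak (`m(bca) = -1`); in particular the Chacon set is not neutral. -/
theorem chacon_not_neutral :
    (((Eext chaconSet [0, 1, 2]).ncard : ℤ) - (Lext chaconSet [0, 1, 2]).ncard
        - (Rext chaconSet [0, 1, 2]).ncard + 1 = 1) ∧
    (((Eext chaconSet [1, 2, 0]).ncard : ℤ) - (Lext chaconSet [1, 2, 0]).ncard
        - (Rext chaconSet [1, 2, 0]).ncard + 1 = -1) ∧
    ¬ (∀ w ∈ chaconSet, ((Eext chaconSet w).ncard : ℤ) - (Lext chaconSet w).ncard
        - (Rext chaconSet w).ncard + 1 = 0) := by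
  have e1 : (Eext chaconSet [0, 1, 2]).ncard = 4 := by
    rw [hE_abc, Set.ncard_coe_finset]; decide
  have e2 : (Lext chaconSet [0, 1, 2]).ncard = 2 := by
    rw [hL_abc, Set.ncard_coe_finset]; decide
  have e3 : (Rext chaconSet [0, 1, 2]).ncard = 2 := by
    rw [hR_abc, Set.ncard_coe_finset]; decide
  have e4 : (Eext chaconSet [1, 2, 0]).ncard = 2 := by
    rw [hE_bca, Set.ncard_coe_finset]; decide
  have e5 : (Lext chaconSet [1, 2, 0]).ncard = 2 := by
    rw [hL_bca, Set.ncard_coe_finset]; decide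
  have e6 : (Rext chaconSet [1, 2, 0]).ncard = 2 := by
    rw [hR_bca, Set.ncard_coe_finset]; decide
  refine ⟨by rw [e1, e2, e3]; norm_num, by rw [e4, e5, e6]; norm_num, ?_⟩
  intro h
  have hmem : [0, 1, 2] ∈ chaconSet := (mem_chacon_iff (by simp)).mpr (by decide)
  have := h [0, 1, 2] hmem
  rw [e1, e2, e3] at this
  norm_num at this


end Paper
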